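/- arXiv:0802.2681 — 4 statements merged into one kernel-verified Lean document; each statement's English description precedes it below -/
import Mathlib

section
/- For every integer n ≥ 1 and every rational number x, the sum over all partitions ρ of n of the quantity ((−x)^{ℓ(ρ)} / |Aut(ρ)|) · ∏_{i=1}^{ℓ(ρ)} ρ_i^{ρ_i − 1}/ρ_i! equals (−1)^n · x · (x − n)^{n−1} / n!. In particular, for integers m > a ≥ 1 and n = m − a, one has Σ_{ρ ⊢ n} (1/|Aut(ρ)|) ∏_i (ρ_i^{ρ_i−1}/ρ_i!) (−m)^{ℓ(ρ)} = −m·(−a)^{n−1}/n!, which is the partition-sum identity used in the paper's localization computation of the series A_k(u). -/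
open Finset



noncomputable def fd (m p : ℕ) : ℚ :=
  ∑ k ∈ range (m+1), (-1:ℚ)^k * (m.choose k) * (k:ℚ)^p

lemma fd_rec (m q : ℕ) :
    fd (m+1) (q+1) = -((m:ℚ)+1) * ∑ i ∈ range (q+1), (q.choose i : ℚ) * fd m i := by
  have h1 : fd (m+1) (q+1)
      = ∑ k ∈ range (m+1), (-1:ℚ)^(k+1) * ((m+1).choose (k+1)) * ((k:ℚ)+1)^(q+1) := by
    rw [fd, Finset.sum_range_succ']
    simp
  have h2 : ∀ k : ℕ, (((m+1).choose (k+1) : ℚ)) * ((k:ℚ)+1) = ((m:ℚ)+1) * (m.choose k) := by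
    intro k
    have h : ((m+1).choose (k+1) * (k+1) : ℕ) = ((m+1) * m.choose k : ℕ) := by
      simpa [Nat.succ_eq_add_one] using (Nat.add_one_mul_choose_eq m k).symm
    exact_mod_cast h
  have h3 : ∀ k : ℕ, ((k:ℚ)+1)^q = ∑ i ∈ range (q+1), (q.choose i : ℚ) * (k:ℚ)^i := by
    intro k
    rw [add_pow]
    exact Finset.sum_congr rfl (by intro i _; ring)
  rw [h1]
  have h4 : ∀ k ∈ range (m+1),
      (-1:ℚ)^(k+1) * ((m+1).choose (k+1)) * ((k:ℚ)+1)^(q+1)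
      = -((m:ℚ)+1) * ∑ i ∈ range (q+1), (q.choose i : ℚ) * ((-1:ℚ)^k * (m.choose k) * (k:ℚ)^i) := by
    intro k _
    calc (-1:ℚ)^(k+1) * ((m+1).choose (k+1)) * ((k:ℚ)+1)^(q+1)
        = -((-1:ℚ)^k) * (((m+1).choose (k+1) : ℚ) * ((k:ℚ)+1)) * ((k:ℚ)+1)^q := by
          rw [pow_succ, pow_succ]; ring
      _ = -((-1:ℚ)^k) * (((m:ℚ)+1) * (m.choose k)) * ((k:ℚ)+1)^q := by rw [h2]
      _ = -((m:ℚ)+1) * (((-1:ℚ)^k * (m.choose k)) * ((k:ℚ)+1)^q) := by ring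
      _ = -((m:ℚ)+1) * (((-1:ℚ)^k * (m.choose k)) * ∑ i ∈ range (q+1), (q.choose i : ℚ) * (k:ℚ)^i) := by rw [h3]
      _ = -((m:ℚ)+1) * ∑ i ∈ range (q+1), (q.choose i : ℚ) * ((-1:ℚ)^k * (m.choose k) * (k:ℚ)^i) := by
          rw [Finset.mul_sum]; congr 1; exact Finset.sum_congr rfl (by intro i _; ring)
  rw [Finset.sum_congr rfl h4, ← Finset.mul_sum]
  congr 1
  rw [Finset.sum_comm]
  exact Finset.sum_congr rfl (by intro i _; rw [fd, Finset.mul_sum])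

lemma fd_lt : ∀ p m : ℕ, p < m → fd m p = 0 := by
  intro p
  induction p using Nat.strong_induction_on with
  | _ p ih =>
    intro m hpm
    rcases Nat.eq_zero_or_pos p with hp | hp
    · subst hp
      have hm : m ≠ 0 := by omega
      have h0 := Int.alternating_sum_range_choose_of_ne hm
      have h1 : ((∑ i ∈ range (m+1), (-1:ℤ)^i * (m.choose i) : ℤ) : ℚ) = 0 := by rw [h0]; simp
      push_cast at h1
      rw [fd]
      simpa using h1
    · obtain ⟨q, rfl⟩ : ∃ q, p = q + 1 := ⟨p - 1, by omega⟩
      obtain ⟨m', rfl⟩ : ∃ m', m = m' + 1 := ⟨m - 1, by omega⟩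
      rw [fd_rec]
      have : ∀ i ∈ range (q+1), (q.choose i : ℚ) * fd m' i = 0 := by
        intro i hi
        simp only [Finset.mem_range] at hi
        rw [ih i (by omega) m' (by omega)]
        ring
      rw [Finset.sum_congr rfl this]
      simp

lemma fd_diag : ∀ m : ℕ, fd m m = (-1:ℚ)^m * (Nat.factorial m) := by
  intro m
  induction m with
  | zero => simp [fd]
  | succ m ih =>
    rw [fd_rec, Finset.sum_range_succ]
    have : ∀ i ∈ range m, (m.choose i : ℚ) * fd m i = 0 := by
      intro i hi
      rw [fd_lt i m (by simp at hi; omega)]; ring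
    rw [Finset.sum_congr rfl this]
    simp only [Finset.sum_const_zero, zero_add, Nat.choose_self, Nat.cast_one, one_mul, ih]
    rw [Nat.factorial_succ]
    push_cast
    ring


lemma fd_diag' (m : ℕ) :
    (∑ k ∈ range (m+1), (-1:ℚ)^k * (m.choose k) * (k:ℚ)^m) = (-1:ℚ)^m * (Nat.factorial m) :=
  fd_diag m

lemma neg_one_pow_sub (N k : ℕ) (h : k ≤ N) : ((-1:ℚ))^(N-k) = (-1)^N * (-1)^k := by
  have h2 : N + k = (N - k) + 2*k := by omega
  have h3 : ((-1:ℚ))^N * (-1)^k = (-1)^(N+k) := by rw [pow_add]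
  rw [h3, h2, pow_add, pow_mul]
  norm_num

lemma choose_choose (m k j : ℕ) (h : k + j ≤ m) :
    m.choose k * (m-k).choose j = m.choose j * (m-j).choose k := by
  have h1 := Nat.choose_mul (n := m) (Nat.le_add_right k j)
  have h2 := Nat.choose_mul (n := m) (Nat.le_add_left j k)
  rw [Nat.add_sub_cancel_left] at h1
  rw [Nat.add_sub_cancel] at h2
  rw [← h1, ← h2, Nat.choose_symm_add]

lemma cfam_inner (m j : ℕ) (hj : j ≤ m) :
    ∑ k ∈ range (m+1), (m.choose k : ℚ) * (k:ℚ)^k * ((-(k:ℚ))^(m-k-j) * ((m-k).choose j))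
      = (m.factorial : ℚ) / (j.factorial) := by
  rw [← Finset.sum_subset (Finset.range_subset_range.2 (by omega : m - j + 1 ≤ m + 1))
    (by
      intro k hk1 hk
      simp only [Finset.mem_range, not_lt] at hk
      simp only [Finset.mem_range] at hk1
      have : m - k < j := by omega
      rw [Nat.choose_eq_zero_of_lt this]
      simp)]
  have key : ∀ k ∈ range (m-j+1),
      (m.choose k : ℚ) * (k:ℚ)^k * ((-(k:ℚ))^(m-k-j) * ((m-k).choose j))
      = ((m.choose j : ℚ) * (-1:ℚ)^(m-j)) * ((-1:ℚ)^k * ((m-j).choose k) * (k:ℚ)^(m-j)) := by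
    intro k hk
    simp only [Finset.mem_range] at hk
    have hkj : k + j ≤ m := by omega
    have hcc : (m.choose k : ℚ) * ((m-k).choose j) = (m.choose j : ℚ) * ((m-j).choose k) := by
      exact_mod_cast congrArg (Nat.cast : ℕ → ℚ) (choose_choose m k j hkj)
    have hexp : m - k - j = m - j - k := by omega
    -- k^k * (-k)^(m-j-k) = (-1)^(m-j) * (-1)^k * k^(m-j)
    have hpow : (k:ℚ)^k * (-(k:ℚ))^(m-j-k) = (-1:ℚ)^(m-j) * ((-1:ℚ)^k * (k:ℚ)^(m-j)) := by
      rw [neg_pow, neg_one_pow_sub (m-j) k (by omega)]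
      rcases Nat.eq_zero_or_pos k with hk0 | hk0
      · subst hk0
        rcases Nat.eq_zero_or_pos (m-j) with h0 | h0
        · rw [h0]; norm_num
        · push_cast
          rw [zero_pow (by omega : m - j ≠ 0), zero_pow (by omega : m - j - 0 ≠ 0)]
          ring
      · have hkk : (k:ℚ)^k * (k:ℚ)^(m-j-k) = (k:ℚ)^(m-j) := by
          rw [← pow_add]
          congr 1
          omega
        linear_combination ((-1:ℚ)^(m-j) * (-1:ℚ)^k) * hkk
    calc (m.choose k : ℚ) * (k:ℚ)^k * ((-(k:ℚ))^(m-k-j) * ((m-k).choose j))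
        = ((m.choose k : ℚ) * ((m-k).choose j)) * ((k:ℚ)^k * (-(k:ℚ))^(m-j-k)) := by
          rw [hexp]; ring
      _ = ((m.choose j : ℚ) * ((m-j).choose k)) * ((-1:ℚ)^(m-j) * ((-1:ℚ)^k * (k:ℚ)^(m-j))) := by
          rw [hcc, hpow]
      _ = ((m.choose j : ℚ) * (-1:ℚ)^(m-j)) * ((-1:ℚ)^k * ((m-j).choose k) * (k:ℚ)^(m-j)) := by
          ring
  rw [Finset.sum_congr rfl key, ← Finset.mul_sum, fd_diag' (m-j)]
  have hfact : (m.choose j : ℚ) * ((m-j).factorial) = (m.factorial : ℚ) / (j.factorial) := by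
    have := Nat.choose_mul_factorial_mul_factorial hj
    have hc : ((m.choose j * j.factorial * (m-j).factorial : ℕ) : ℚ) = (m.factorial : ℚ) := by
      exact_mod_cast congrArg (Nat.cast : ℕ → ℚ) this
    push_cast at hc
    field_simp
    linear_combination hc
  calc (m.choose j : ℚ) * (-1:ℚ)^(m-j) * ((-1:ℚ)^(m-j) * ((m-j).factorial))
      = ((m.choose j : ℚ) * ((m-j).factorial)) * ((-1:ℚ)^(m-j) * (-1:ℚ)^(m-j)) := by ring
    _ = (m.factorial : ℚ) / (j.factorial) := by
        have hh : ((-1:ℚ))^(m-j) * ((-1:ℚ))^(m-j) = 1 := by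
          rw [← pow_add, ← two_mul, pow_mul]
          norm_num
        rw [hfact, hh, mul_one]

lemma cfam (m : ℕ) (v : ℚ) :
    ∑ k ∈ range (m+1), (m.choose k : ℚ) * (k:ℚ)^k * (v - k)^(m-k)
      = ∑ j ∈ range (m+1), ((m.factorial : ℚ) / (j.factorial)) * v^j := by
  have expand : ∀ k ∈ range (m+1),
      (m.choose k : ℚ) * (k:ℚ)^k * (v - k)^(m-k)
      = ∑ j ∈ range (m+1),
          v^j * ((m.choose k : ℚ) * (k:ℚ)^k * ((-(k:ℚ))^(m-k-j) * ((m-k).choose j))) := by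
    intro k hk
    simp only [Finset.mem_range] at hk
    have : (v - (k:ℚ))^(m-k) = ∑ j ∈ range (m-k+1), v^j * (-(k:ℚ))^(m-k-j) * ((m-k).choose j) := by
      rw [sub_eq_add_neg, add_pow]
    rw [this, Finset.mul_sum]
    rw [← Finset.sum_subset (Finset.range_subset_range.2 (by omega : m - k + 1 ≤ m + 1))
      (by
        intro j hj1 hj
        simp only [Finset.mem_range, not_lt] at hj
        rw [Nat.choose_eq_zero_of_lt (by omega : m - k < j)]
        simp)]
    exact Finset.sum_congr rfl (by intro j _; ring)
  rw [Finset.sum_congr rfl expand, Finset.sum_comm]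
  refine Finset.sum_congr rfl ?_
  intro j hj
  simp only [Finset.mem_range] at hj
  rw [← Finset.mul_sum, cfam_inner m j (by omega), mul_comm]



lemma sum_range_split (n : ℕ) (hn : 1 ≤ n) (f : ℕ → ℚ) :
    ∑ k ∈ range (n+1), f k = f 0 + (∑ k ∈ Ico 1 n, f k) + f n := by
  rw [Finset.sum_range_succ, Finset.range_eq_Ico,
    Finset.sum_eq_sum_Ico_succ_bot (by omega : 0 < n) f]

lemma sum_range_split' (n : ℕ) (hn : 1 ≤ n) (f : ℕ → ℚ) :
    ∑ k ∈ range n, f k = f 0 + ∑ k ∈ Ico 1 n, f k := by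
  rw [Finset.range_eq_Ico, Finset.sum_eq_sum_Ico_succ_bot (by omega : 0 < n) f]

lemma Elem (n : ℕ) (hn : 1 ≤ n) (x : ℚ) :
    ∑ k ∈ Ico 1 n, (n.choose k : ℚ) * (k:ℚ)^k * (-1:ℚ)^(k+1) * x * (x - n + k)^(n-k-1)
      = n * (x - n)^(n-1) + (-1:ℚ)^n * (n:ℚ)^n := by
  set v : ℚ := (n:ℚ) - x with hv
  -- T m := ∑ j ∈ range (m+1), m!/j! v^j
  have hT : ∑ j ∈ range (n+1), ((n.factorial : ℚ) / (j.factorial)) * v^j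
      = (n:ℚ) * (∑ j ∈ range n, (((n-1).factorial : ℚ) / (j.factorial)) * v^j) + v^n := by
    rw [Finset.sum_range_succ, div_self (by exact_mod_cast Nat.factorial_ne_zero n), one_mul,
      Finset.mul_sum]
    congr 1
    refine Finset.sum_congr rfl ?_
    intro j _
    have h : (n:ℚ) * ((n-1).factorial : ℚ) = (n.factorial : ℚ) := by
      exact_mod_cast congrArg (Nat.cast : ℕ → ℚ) (Nat.mul_factorial_pred (by omega))
    rw [← h]
    ring
  -- split each term
  have hsplit : ∀ k ∈ Ico 1 n,
      (n.choose k : ℚ) * (k:ℚ)^k * (-1:ℚ)^(k+1) * x * (x - n + k)^(n-k-1)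
      = (-1:ℚ)^(n+1) * ((n.choose k : ℚ) * (k:ℚ)^k * (v - k)^(n-k))
        + (-1:ℚ)^n * (n:ℚ) * (((n-1).choose k : ℚ) * (k:ℚ)^k * (v - k)^((n-1)-k)) := by
    intro k hk
    simp only [Finset.mem_Ico] at hk
    obtain ⟨hk1, hkn⟩ := hk
    have e1 : x * (x - n + k)^(n-k-1) = (x - n + k)^(n-k) + ((n:ℚ) - k) * (x - n + k)^(n-k-1) := by
      have hp : (x - n + k)^(n-k) = (x - n + k)^(n-k-1) * (x - n + k) := by
        rw [← pow_succ]
        congr 1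
        omega
      rw [hp]
      ring
    have hvk : v - k = -(x - (n:ℚ) + k) := by rw [hv]; ring
    have e2 : (v - k)^(n-k) = (-1:ℚ)^(n-k) * (x - n + k)^(n-k) := by
      rw [hvk, neg_pow]
    have e3 : (v - k)^((n-1)-k) = (-1:ℚ)^(n-1-k) * (x - n + k)^(n-k-1) := by
      rw [hvk, neg_pow]
      congr 2 <;> omega
    have s1 : (-1:ℚ)^(n+1) * (-1:ℚ)^(n-k) = (-1:ℚ)^(k+1) := by
      rw [neg_one_pow_sub n k (by omega), pow_succ]
      have : ((-1:ℚ))^n * ((-1:ℚ))^n = 1 := by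
        rw [← pow_add, ← two_mul, pow_mul]; norm_num
      calc (-1:ℚ)^n * (-1:ℚ) * ((-1:ℚ)^n * (-1:ℚ)^k)
          = ((-1:ℚ)^n * (-1:ℚ)^n) * ((-1:ℚ)^k * (-1:ℚ)) := by ring
        _ = (-1:ℚ)^(k+1) := by rw [this, pow_succ]; ring
    have s2 : (-1:ℚ)^n * (-1:ℚ)^(n-1-k) = (-1:ℚ)^(k+1) := by
      rw [neg_one_pow_sub (n-1) k (by omega)]
      have : ((-1:ℚ))^n = (-1:ℚ)^(n-1) * (-1:ℚ) := by
        rw [← pow_succ]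
        congr 1
        omega
      rw [this]
      have h2 : ((-1:ℚ))^(n-1) * ((-1:ℚ))^(n-1) = 1 := by
        rw [← pow_add, ← two_mul, pow_mul]; norm_num
      calc (-1:ℚ)^(n-1) * (-1:ℚ) * ((-1:ℚ)^(n-1) * (-1:ℚ)^k)
          = ((-1:ℚ)^(n-1) * (-1:ℚ)^(n-1)) * ((-1:ℚ)^k * (-1:ℚ)) := by ring
        _ = (-1:ℚ)^(k+1) := by rw [h2, pow_succ]; ring
    have hcnk : (n.choose k : ℚ) * ((n:ℚ) - k) = (n:ℚ) * ((n-1).choose k : ℚ) := by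
      have hnat : (n-1).choose k * n = n.choose k * (n - k) := by
        have := Nat.choose_mul_succ_eq (n-1) k
        rwa [Nat.sub_add_cancel (by omega : 1 ≤ n)] at this
      have hcast : (((n-1).choose k * n : ℕ) : ℚ) = ((n.choose k * (n - k) : ℕ) : ℚ) := by
        exact_mod_cast congrArg (Nat.cast : ℕ → ℚ) hnat
      push_cast [Nat.cast_sub (le_of_lt hkn)] at hcast
      linarith [hcast]
    calc (n.choose k : ℚ) * (k:ℚ)^k * (-1:ℚ)^(k+1) * x * (x - n + k)^(n-k-1)
        = (n.choose k : ℚ) * (k:ℚ)^k * (-1:ℚ)^(k+1) * (x * (x - n + k)^(n-k-1)) := by ring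
      _ = (n.choose k : ℚ) * (k:ℚ)^k * (-1:ℚ)^(k+1) * (x - n + k)^(n-k)
          + ((n.choose k : ℚ) * ((n:ℚ) - k)) * (k:ℚ)^k * (-1:ℚ)^(k+1) * (x - n + k)^(n-k-1) := by
          rw [e1]; ring
      _ = (-1:ℚ)^(n+1) * ((n.choose k : ℚ) * (k:ℚ)^k * (v - k)^(n-k))
          + (-1:ℚ)^n * (n:ℚ) * (((n-1).choose k : ℚ) * (k:ℚ)^k * (v - k)^((n-1)-k)) := by
          rw [e2, e3, hcnk]
          linear_combination (-(↑(n.choose k) * (k:ℚ)^k * (x - ↑n + ↑k)^(n-k))) * s1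
            + (-((n:ℚ) * ↑((n-1).choose k) * (k:ℚ)^k * (x - ↑n + ↑k)^(n-k-1))) * s2
  rw [Finset.sum_congr rfl hsplit, Finset.sum_add_distrib, ← Finset.mul_sum, ← Finset.mul_sum]
  -- identify the two inner sums via cfam
  have hS1 : ∑ k ∈ Ico 1 n, (n.choose k : ℚ) * (k:ℚ)^k * (v - k)^(n-k)
      = (∑ j ∈ range (n+1), ((n.factorial : ℚ) / (j.factorial)) * v^j) - v^n - (n:ℚ)^n := by
    have hfull := cfam n v
    rw [sum_range_split n hn (fun k => (n.choose k : ℚ) * (k:ℚ)^k * (v - k)^(n-k))] at hfull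
    simp only [Nat.choose_zero_right, Nat.cast_one, Nat.cast_zero, one_mul, pow_zero,
      Nat.choose_self, Nat.sub_self] at hfull
    have hv0 : (v - 0)^(n-0) = v^n := by norm_num
    rw [hv0, mul_one] at hfull
    linarith [hfull]
  have hS2 : ∑ k ∈ Ico 1 n, ((n-1).choose k : ℚ) * (k:ℚ)^k * (v - k)^((n-1)-k)
      = (∑ j ∈ range n, (((n-1).factorial : ℚ) / (j.factorial)) * v^j) - v^(n-1) := by
    have hfull := cfam (n-1) v
    have hr : (n-1) + 1 = n := by omega
    rw [hr] at hfull
    rw [sum_range_split' n hn (fun k => ((n-1).choose k : ℚ) * (k:ℚ)^k * (v - k)^((n-1)-k))] at hfull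
    simp only [Nat.choose_zero_right, Nat.cast_one, Nat.cast_zero, one_mul, pow_zero] at hfull
    have hv0 : (v - 0)^((n-1)-0) = v^(n-1) := by norm_num
    rw [hv0] at hfull
    linarith [hfull]
  rw [hS1, hS2, hT]
  -- final ring computation
  have hvpow : v^(n-1) = (-1:ℚ)^(n-1) * (x - n)^(n-1) := by
    have : v = -(x - n) := by rw [hv]; ring
    rw [this, neg_pow]
  have hsign : (-1:ℚ)^n * (-1:ℚ)^(n-1) = -1 := by
    have h1 : ((-1:ℚ))^n = (-1:ℚ)^(n-1) * (-1:ℚ) := by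
      rw [← pow_succ]
      congr 1
      omega
    have h2 : ((-1:ℚ))^(n-1) * ((-1:ℚ))^(n-1) = 1 := by
      rw [← pow_add, ← two_mul, pow_mul]
      norm_num
    rw [h1]
    linear_combination (-1:ℚ) * h2
  have hps : (-1:ℚ)^(n+1) = -(-1:ℚ)^n := by rw [pow_succ]; ring
  rw [hvpow, hps]
  have expand : -(-1:ℚ)^n * ((n:ℚ) * (∑ j ∈ range n, (((n-1).factorial : ℚ) / (j.factorial)) * v^j) + v^n - v^n - (n:ℚ)^n)
      + (-1:ℚ)^n * (n:ℚ) * ((∑ j ∈ range n, (((n-1).factorial : ℚ) / (j.factorial)) * v^j) - (-1:ℚ)^(n-1) * (x - n)^(n-1))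
      = (-1:ℚ)^n * (n:ℚ)^n - ((-1:ℚ)^n * (-1:ℚ)^(n-1)) * (n:ℚ) * (x - n)^(n-1) := by ring
  rw [expand, hsign]
  ring


noncomputable def partw (n : ℕ) (x : ℚ) (ρ : Nat.Partition n) : ℚ :=
  (-x) ^ (Multiset.card ρ.parts) /
      (∏ j ∈ ρ.parts.toFinset, (Nat.factorial (ρ.parts.count j) : ℚ)) *
    (ρ.parts.map fun (p : ℕ) => (p : ℚ) ^ (p - 1) / (Nat.factorial p : ℚ)).prod

noncomputable def partwN (N n : ℕ) (x : ℚ) (ρ : Nat.Partition n) : ℚ :=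
  (-x) ^ (Multiset.card ρ.parts) /
      (∏ j ∈ range (N+1), (Nat.factorial (ρ.parts.count j) : ℚ)) *
    (ρ.parts.map fun (p : ℕ) => (p : ℚ) ^ (p - 1) / (Nat.factorial p : ℚ)).prod

noncomputable def pf (n : ℕ) (x : ℚ) : ℚ := ∑ ρ : Nat.Partition n, partw n x ρ

lemma parts_le {n : ℕ} (ρ : Nat.Partition n) {p : ℕ} (hp : p ∈ ρ.parts) : p ≤ n := by
  rw [← ρ.parts_sum]
  exact Multiset.le_sum_of_mem hp

lemma partw_eq_partwN (N n : ℕ) (h : n ≤ N) (x : ℚ) (ρ : Nat.Partition n) :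
    partw n x ρ = partwN N n x ρ := by
  have hsub : ρ.parts.toFinset ⊆ range (N+1) := by
    intro j hj
    simp only [Multiset.mem_toFinset] at hj
    simp only [Finset.mem_range]
    have := parts_le ρ hj
    omega
  have hprod : (∏ j ∈ ρ.parts.toFinset, (Nat.factorial (ρ.parts.count j) : ℚ))
      = ∏ j ∈ range (N+1), (Nat.factorial (ρ.parts.count j) : ℚ) := by
    refine Finset.prod_subset hsub ?_
    intro j _ hj2
    have : ρ.parts.count j = 0 := by
      rw [Multiset.count_eq_zero]
      intro hmem
      exact hj2 (Multiset.mem_toFinset.2 hmem)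
    rw [this]
    simp
  rw [partw, partwN, hprod]

lemma pf_zero (x : ℚ) : pf 0 x = 1 := by
  rw [pf]
  rw [Fintype.sum_unique]
  have hparts : (default : Nat.Partition 0).parts = 0 := rfl
  rw [partw, hparts]
  simp

lemma msum_eq (N : ℕ) (s : Multiset ℕ) (h : ∀ p ∈ s, p < N) :
    ((s.sum : ℕ) : ℚ) = ∑ j ∈ range N, (s.count j : ℚ) * j := by
  induction s using Multiset.induction with
  | empty => simp
  | cons a s ih =>
    have ha : a ∈ range N := by
      simp only [Finset.mem_range]
      exact h a (Multiset.mem_cons_self a s)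
    have ih' := ih (fun p hp => h p (Multiset.mem_cons_of_mem hp))
    rw [Multiset.sum_cons, Nat.cast_add, ih']
    have hterm : ∀ j ∈ range N, ((a ::ₘ s).count j : ℚ) * j
        = (s.count j : ℚ) * j + (if j = a then (j:ℚ) else 0) := by
      intro j _
      rw [Multiset.count_cons]
      push_cast
      by_cases hja : j = a <;> simp [hja] <;> ring
    rw [Finset.sum_congr rfl hterm, Finset.sum_add_distrib,
      Finset.sum_ite_eq' (range N) a (fun j => (j:ℚ))]
    simp only [ha, if_true]
    ring

def insP (n k : ℕ) (hk1 : 1 ≤ k) (hk : k ≤ n) (ρ : Nat.Partition (n-k)) : Nat.Partition n where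
  parts := k ::ₘ ρ.parts
  parts_pos := by
    intro i hi
    rcases Multiset.mem_cons.1 hi with h | h
    · omega
    · exact ρ.parts_pos h
  parts_sum := by
    rw [Multiset.sum_cons, ρ.parts_sum]
    omega

lemma prod_fact_ne_zero (s : Finset ℕ) (g : ℕ → ℕ) :
    (∏ j ∈ s, (Nat.factorial (g j) : ℚ)) ≠ 0 :=
  Finset.prod_ne_zero_iff.2 fun j _ => by
    exact_mod_cast Nat.factorial_ne_zero (g j)

lemma keyalg (x M kp kf cf P c L : ℚ) (hP : P ≠ 0) (hkf : kf ≠ 0) (hcf : cf ≠ 0)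
    (hc1 : c + 1 ≠ 0) :
    (-x) * (kp / kf) * (L / (cf * P) * M)
      = (c + 1) * (L * (-x) / ((c + 1) * cf * P) * (kp / kf * M)) := by
  field_simp

lemma Ksum (n k : ℕ) (hk1 : 1 ≤ k) (hk : k ≤ n) (x : ℚ) :
    ∑ ρ : Nat.Partition n, (ρ.parts.count k : ℚ) * partwN n n x ρ
      = (-x) * ((k:ℚ)^(k-1) / (Nat.factorial k : ℚ)) * pf (n-k) x := by
  have hpf : pf (n-k) x = ∑ ρ' : Nat.Partition (n-k), partwN n (n-k) x ρ' := by
    rw [pf]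
    exact Finset.sum_congr rfl fun ρ' _ => partw_eq_partwN n (n-k) (by omega) x ρ'
  rw [hpf, Finset.mul_sum]
  rw [← Finset.sum_filter_of_ne (p := fun ρ : Nat.Partition n => k ∈ ρ.parts)
    (fun ρ _ hne => by
      by_contra hmem
      apply hne
      rw [Multiset.count_eq_zero_of_notMem hmem]
      simp)]
  refine (Finset.sum_bij' (fun (ρ' : Nat.Partition (n-k)) (_ : ρ' ∈ univ) => insP n k hk1 hk ρ')
    (fun (ρ : Nat.Partition n) (hρ : ρ ∈ univ.filter (fun ρ => k ∈ ρ.parts)) =>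
      (⟨ρ.parts.erase k, fun {i} hi => ρ.parts_pos (Multiset.mem_of_mem_erase hi), by
        have hmem : k ∈ ρ.parts := by
          simpa using (Finset.mem_filter.1 hρ).2
        have hc : k ::ₘ ρ.parts.erase k = ρ.parts := Multiset.cons_erase hmem
        have hsum : (k ::ₘ ρ.parts.erase k).sum = n := by rw [hc, ρ.parts_sum]
        rw [Multiset.sum_cons] at hsum
        omega⟩ : Nat.Partition (n-k)))
    ?_ ?_ ?_ ?_ ?_).symm
  · intro ρ' _
    simp only [Finset.mem_filter, Finset.mem_univ, true_and]
    exact Multiset.mem_cons_self k _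
  · intro ρ hρ
    exact Finset.mem_univ _
  · intro ρ' _
    apply Nat.Partition.ext
    exact Multiset.erase_cons_head k _
  · intro ρ hρ
    apply Nat.Partition.ext
    have hmem : k ∈ ρ.parts := by simpa using (Finset.mem_filter.1 hρ).2
    exact Multiset.cons_erase hmem
  · intro ρ' _
    have hparts : (insP n k hk1 hk ρ').parts = k ::ₘ ρ'.parts := rfl
    have hmemk : k ∈ range (n+1) := by
      simp only [Finset.mem_range]
      omega
    have hd1 : (∏ j ∈ range (n+1), (Nat.factorial ((k ::ₘ ρ'.parts).count j) : ℚ))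
        = (Nat.factorial (ρ'.parts.count k + 1) : ℚ)
          * ∏ j ∈ (range (n+1)).erase k, (Nat.factorial (ρ'.parts.count j) : ℚ) := by
      rw [← Finset.mul_prod_erase (range (n+1)) _ hmemk]
      congr 1
      · rw [Multiset.count_cons_self]
      · refine Finset.prod_congr rfl ?_
        intro j hj
        rw [Multiset.count_cons_of_ne (Finset.ne_of_mem_erase hj) ρ'.parts]
    have hd2 : (∏ j ∈ range (n+1), (Nat.factorial (ρ'.parts.count j) : ℚ))
        = (Nat.factorial (ρ'.parts.count k) : ℚ)
          * ∏ j ∈ (range (n+1)).erase k, (Nat.factorial (ρ'.parts.count j) : ℚ) := by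
      rw [← Finset.mul_prod_erase (range (n+1)) _ hmemk]
    set P : ℚ := ∏ j ∈ (range (n+1)).erase k, (Nat.factorial (ρ'.parts.count j) : ℚ) with hP
    have hPne : P ≠ 0 := prod_fact_ne_zero _ _
    have hcne : (Nat.factorial (ρ'.parts.count k) : ℚ) ≠ 0 := by
      exact_mod_cast Nat.factorial_ne_zero _
    have hkne : (Nat.factorial k : ℚ) ≠ 0 := by exact_mod_cast Nat.factorial_ne_zero k
    have hc1 : ((ρ'.parts.count k : ℚ) + 1) ≠ 0 := by positivity
    have hfs : (Nat.factorial (ρ'.parts.count k + 1) : ℚ)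
        = ((ρ'.parts.count k : ℚ) + 1) * (Nat.factorial (ρ'.parts.count k) : ℚ) := by
      rw [Nat.factorial_succ]
      push_cast
      ring
    rw [partwN, partwN, hparts, hd1, hd2, Multiset.card_cons, Multiset.count_cons_self,
      Multiset.map_cons, Multiset.prod_cons, hfs, Nat.cast_add, Nat.cast_one, pow_succ]
    exact keyalg x _ _ _ _ P _ _ hPne hkne hcne hc1



noncomputable def rfun (n : ℕ) (x : ℚ) : ℚ :=
  if n = 0 then 1 else (-1:ℚ)^n * x * (x - n)^(n-1) / (Nat.factorial n : ℚ)

lemma R2 (n : ℕ) (hn : 1 ≤ n) (x : ℚ) :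
    (n:ℚ) * rfun n x
      = ∑ k ∈ Ico 1 (n+1), (-x) * ((k:ℚ)^k / (Nat.factorial k : ℚ)) * rfun (n-k) x := by
  rw [Finset.sum_Ico_succ_top hn]
  have h0 : rfun (n-n) x = 1 := by
    rw [Nat.sub_self, rfun]
    simp
  rw [h0]
  have hterm : ∀ k ∈ Ico 1 n, (-x) * ((k:ℚ)^k / (Nat.factorial k : ℚ)) * rfun (n-k) x
      = (x * (-1:ℚ)^n / (Nat.factorial n : ℚ))
        * ((n.choose k : ℚ) * (k:ℚ)^k * (-1:ℚ)^(k+1) * x * (x - n + k)^(n-k-1)) := by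
    intro k hk
    simp only [Finset.mem_Ico] at hk
    obtain ⟨hk1, hkn⟩ := hk
    rw [rfun, if_neg (by omega)]
    rw [Nat.cast_sub (by omega : k ≤ n)]
    rw [show x - ((n:ℚ) - (k:ℚ)) = x - (n:ℚ) + (k:ℚ) from by ring]
    rw [neg_one_pow_sub n k (by omega)]
    have hC : (n.choose k : ℚ) * (Nat.factorial k : ℚ) * (Nat.factorial (n-k) : ℚ)
        = (Nat.factorial n : ℚ) := by
      exact_mod_cast congrArg (Nat.cast : ℕ → ℚ)
        (Nat.choose_mul_factorial_mul_factorial (by omega : k ≤ n))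
    have h1 : (Nat.factorial k : ℚ) ≠ 0 := by exact_mod_cast Nat.factorial_ne_zero k
    have h2 : (Nat.factorial (n-k) : ℚ) ≠ 0 := by exact_mod_cast Nat.factorial_ne_zero (n-k)
    have h3 : (Nat.factorial n : ℚ) ≠ 0 := by exact_mod_cast Nat.factorial_ne_zero n
    field_simp
    linear_combination (x^2 * (-1:ℚ)^k * (x - n + k)^(n-k-1)) * hC
  rw [Finset.sum_congr rfl hterm, ← Finset.mul_sum, Elem n hn x]
  rw [rfun, if_neg (by omega)]
  have h3 : (Nat.factorial n : ℚ) ≠ 0 := by exact_mod_cast Nat.factorial_ne_zero n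
  have hsq : ((-1:ℚ))^n * (-1:ℚ)^n = 1 := by
    rw [← pow_add, ← two_mul, pow_mul]
    norm_num
  have hsq2 : ((-1:ℚ))^(n*2) = 1 := by
    rw [pow_mul']
    norm_num
  field_simp
  linear_combination (-((n:ℚ)^n * x)) * hsq2

lemma R1 (n : ℕ) (hn : 1 ≤ n) (x : ℚ) :
    (n:ℚ) * pf n x
      = ∑ k ∈ Ico 1 (n+1), (-x) * ((k:ℚ)^k / (Nat.factorial k : ℚ)) * pf (n-k) x := by
  have hN : pf n x = ∑ ρ : Nat.Partition n, partwN n n x ρ := by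
    rw [pf]
    exact Finset.sum_congr rfl fun ρ _ => partw_eq_partwN n n le_rfl x ρ
  rw [hN, Finset.mul_sum]
  have hrow : ∀ ρ ∈ (univ : Finset (Nat.Partition n)), (n:ℚ) * partwN n n x ρ
      = ∑ k ∈ range (n+1), (k:ℚ) * ((ρ.parts.count k : ℚ) * partwN n n x ρ) := by
    intro ρ _
    have hms := msum_eq (n+1) ρ.parts (fun p hp => by
      have := parts_le ρ hp
      omega)
    rw [ρ.parts_sum] at hms
    calc (n:ℚ) * partwN n n x ρ
        = (∑ j ∈ range (n+1), (ρ.parts.count j : ℚ) * j) * partwN n n x ρ := by rw [← hms]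
      _ = ∑ k ∈ range (n+1), (k:ℚ) * ((ρ.parts.count k : ℚ) * partwN n n x ρ) := by
          rw [Finset.sum_mul]
          exact Finset.sum_congr rfl fun k _ => by ring
  rw [Finset.sum_congr rfl hrow, Finset.sum_comm]
  have hcol : ∀ k ∈ range (n+1), ∑ ρ : Nat.Partition n, (k:ℚ) * ((ρ.parts.count k : ℚ) * partwN n n x ρ)
      = (k:ℚ) * ∑ ρ : Nat.Partition n, (ρ.parts.count k : ℚ) * partwN n n x ρ := by
    intro k _
    rw [Finset.mul_sum]
  rw [Finset.sum_congr rfl hcol]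
  rw [Finset.range_eq_Ico, Finset.sum_eq_sum_Ico_succ_bot (by omega : 0 < n + 1)]
  rw [Nat.cast_zero, zero_mul, zero_add]
  refine Finset.sum_congr rfl ?_
  intro k hk
  simp only [Finset.mem_Ico] at hk
  rw [Ksum n k (by omega) (by omega) x]
  have hpow : (k:ℚ) * (k:ℚ)^(k-1) = (k:ℚ)^k := by
    rw [← pow_succ']
    congr 1
    omega
  calc (k:ℚ) * ((-x) * ((k:ℚ)^(k-1) / (Nat.factorial k : ℚ)) * pf (n-k) x)
      = ((k:ℚ) * (k:ℚ)^(k-1)) * ((-x) * (1 / (Nat.factorial k : ℚ)) * pf (n-k) x) := by ring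
    _ = (-x) * ((k:ℚ)^k / (Nat.factorial k : ℚ)) * pf (n-k) x := by rw [hpow]; ring

lemma pf_eq_rfun : ∀ (n : ℕ) (x : ℚ), pf n x = rfun n x := by
  intro n
  induction n using Nat.strong_induction_on with
  | _ n ih =>
    intro x
    rcases Nat.eq_zero_or_pos n with h0 | h1
    · subst h0
      rw [pf_zero, rfun]
      simp
    · have e1 := R1 n h1 x
      have e2 := R2 n h1 x
      have hsums : ∑ k ∈ Ico 1 (n+1), (-x) * ((k:ℚ)^k / (Nat.factorial k : ℚ)) * pf (n-k) x
          = ∑ k ∈ Ico 1 (n+1), (-x) * ((k:ℚ)^k / (Nat.factorial k : ℚ)) * rfun (n-k) x := by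
        refine Finset.sum_congr rfl ?_
        intro k hk
        simp only [Finset.mem_Ico] at hk
        rw [ih (n-k) (by omega) x]
      have : (n:ℚ) * pf n x = (n:ℚ) * rfun n x := by
        rw [e1, hsums, ← e2]
      exact mul_left_cancel₀ (by exact_mod_cast (by omega : n ≠ 0)) this

/-- The partition-sum identity
`Σ_{ρ ⊢ n} ((−x)^{ℓ(ρ)}/|Aut(ρ)|) ∏_i ρ_i^{ρ_i−1}/ρ_i! = (−1)^n x (x−n)^{n−1}/n!`,
together with its specialization `x = m`, `n = m − a`, used in the paper's
localization computation of the series `A_k(u)`. -/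
theorem partition_sum_identity (n : ℕ) (hn : 1 ≤ n) :
    (∀ x : ℚ,
      ∑ ρ : Nat.Partition n,
        (-x) ^ ρ.parts.card / (∏ j ∈ ρ.parts.toFinset, (Nat.factorial (ρ.parts.count j) : ℚ)) *
          (ρ.parts.map fun (p : ℕ) => (p : ℚ) ^ (p - 1) / (Nat.factorial p : ℚ)).prod
        = (-1 : ℚ) ^ n * x * (x - (n : ℚ)) ^ (n - 1) / (Nat.factorial n : ℚ)) ∧
    (∀ m a : ℕ, 1 ≤ a → a < m → n = m - a →
      ∑ ρ : Nat.Partition n,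
        (1 / (∏ j ∈ ρ.parts.toFinset, (Nat.factorial (ρ.parts.count j) : ℚ))) *
          (ρ.parts.map fun (p : ℕ) => (p : ℚ) ^ (p - 1) / (Nat.factorial p : ℚ)).prod *
          (-(m : ℚ)) ^ ρ.parts.card
        = -(m : ℚ) * (-(a : ℚ)) ^ (n - 1) / (Nat.factorial n : ℚ)) := by
  have key : ∀ x : ℚ,
      ∑ ρ : Nat.Partition n,
        (-x) ^ ρ.parts.card / (∏ j ∈ ρ.parts.toFinset, (Nat.factorial (ρ.parts.count j) : ℚ)) *
          (ρ.parts.map fun (p : ℕ) => (p : ℚ) ^ (p - 1) / (Nat.factorial p : ℚ)).prod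
        = (-1 : ℚ) ^ n * x * (x - (n : ℚ)) ^ (n - 1) / (Nat.factorial n : ℚ) := by
    intro x
    have h := pf_eq_rfun n x
    rw [rfun, if_neg (by omega)] at h
    exact h
  refine ⟨key, ?_⟩
  intro m a ha ham hnma
  have h := key (m : ℚ)
  have hre : ∑ ρ : Nat.Partition n,
      (1 / (∏ j ∈ ρ.parts.toFinset, (Nat.factorial (ρ.parts.count j) : ℚ))) *
        (ρ.parts.map fun (p : ℕ) => (p : ℚ) ^ (p - 1) / (Nat.factorial p : ℚ)).prod *
        (-(m : ℚ)) ^ ρ.parts.card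
      = ∑ ρ : Nat.Partition n,
      (-(m:ℚ)) ^ ρ.parts.card / (∏ j ∈ ρ.parts.toFinset, (Nat.factorial (ρ.parts.count j) : ℚ)) *
        (ρ.parts.map fun (p : ℕ) => (p : ℚ) ^ (p - 1) / (Nat.factorial p : ℚ)).prod := by
    refine Finset.sum_congr rfl ?_
    intro ρ _
    ring
  rw [hre, h]
  have hcast : ((m:ℚ) - (n:ℚ)) = (a:ℚ) := by
    have : (n:ℚ) = (m:ℚ) - (a:ℚ) := by
      rw [hnma, Nat.cast_sub (by omega : a ≤ m)]
    rw [this]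
    ring
  rw [hcast]
  have hneg : (-(a:ℚ))^(n-1) = (-1:ℚ)^(n-1) * (a:ℚ)^(n-1) := by rw [neg_pow]
  have hs : ((-1:ℚ))^(n-1+1) = (-1:ℚ)^(n-1) * (-1) := pow_succ (-1:ℚ) (n-1)
  rw [show n-1+1 = n from by omega] at hs
  rw [hneg, hs]
  ring
end

section
/- Let b_1, b_2, b_3, … be any sequence of rational numbers (more generally, elements of a commutative ℚ-algebra), and for each integer k ≥ 1 define c_k = Σ_{j=1}^{k} (j!/k^j)·C(k−1, k−j)·b_j. Then for every integer m ≥ 1 one has Σ_{a=1}^{m} (−1)^{m−a}·C(m,a)·a^m·c_a = m!·b_m. (This is the inversion step by which the paper solves the localization recursion S(mu)·S(u)^{m−2} = (1/m!)·Σ_a (−1)^{m−a}·C(m,a)·a^m·A_a(u) for the Hodge-integral series A_a(u).) -/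
open Polynomial Finset fwdDiff

private lemma fwdDiff_iter_zero_fun (n : ℕ) :
    (fwdDiff (1:ℚ))^[n] (fun _ => (0:ℚ)) = fun _ => 0 := by
  induction n with
  | zero => rfl
  | succ n ih =>
    rw [Function.iterate_succ_apply]
    have : fwdDiff (1:ℚ) (fun _ => (0:ℚ)) = fun _ => (0:ℚ) := by
      funext t; simp [fwdDiff]
    rw [this, ih]

private lemma fd_poly (n : ℕ) : ∀ p : Polynomial ℚ, p.natDegree < n →
    (fwdDiff (1:ℚ))^[n] (fun t => p.eval t) = fun _ => 0 := by
  induction n with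
  | zero => intro p hp; omega
  | succ n ih =>
    intro p hp
    have hΔ : fwdDiff (1:ℚ) (fun t => p.eval t) = fun t => (p.comp (X + C 1) - p).eval t := by
      funext t; simp [fwdDiff, eval_comp]
    rw [Function.iterate_succ_apply, hΔ]
    by_cases h0 : p.natDegree = 0
    · obtain ⟨c, rfl⟩ := natDegree_eq_zero.mp h0
      simpa using fwdDiff_iter_zero_fun n
    · apply ih
      have h1 : (p.comp (X + C 1)).natDegree = p.natDegree := by
        rw [natDegree_comp, natDegree_X_add_C, mul_one]
      have hp0 : p ≠ 0 := fun h => h0 (by simp [h])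
      have hc0 : p.comp (X + C 1) ≠ 0 := fun h => h0 (by rw [← h1, h, natDegree_zero])
      have hdeq : (p.comp (X + C 1)).degree = p.degree := by
        rw [degree_eq_natDegree hc0, degree_eq_natDegree hp0, h1]
      have hlc : (p.comp (X + C 1)).leadingCoeff = p.leadingCoeff := by
        rw [leadingCoeff_comp (by rw [natDegree_X_add_C]; norm_num)]
        rw [(monic_X_add_C (1:ℚ)).leadingCoeff, one_pow, mul_one]
      have hd : (p.comp (X + C 1) - p).degree < p.degree := by
        rw [← hdeq]; exact degree_sub_lt hdeq hc0 hlc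
      by_cases hq : p.comp (X + C 1) - p = 0
      · rw [hq, natDegree_zero]; omega
      · have := natDegree_lt_natDegree hq (hdeq ▸ hd : (p.comp (X + C 1) - p).degree < p.degree)
        · omega

private lemma alt_sum_poly (n : ℕ) (p : Polynomial ℚ) (hp : p.natDegree < n) :
    ∑ k ∈ range (n+1), (-1:ℚ)^(n-k) * (n.choose k : ℚ) * p.eval (k:ℚ) = 0 := by
  have h := fwdDiff_iter_eq_sum_shift (1:ℚ) (fun t => p.eval t) n 0
  rw [fd_poly n p hp] at h
  have h0 : ∑ k ∈ range (n+1), ((-1:ℤ)^(n-k) * (n.choose k : ℤ)) • p.eval (0 + k • (1:ℚ)) = 0 := by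
    simpa using h.symm
  rw [← h0]
  refine Finset.sum_congr rfl fun k _ => ?_
  simp only [zsmul_eq_mul, nsmul_eq_mul, mul_one, zero_add]
  push_cast
  ring

private lemma key_sum (m j : ℕ) (hj1 : 1 ≤ j) (hjm : j ≤ m) :
    ∑ a ∈ Finset.Icc j m, (-1:ℚ)^(m-a) * (m.choose a : ℚ) * (a:ℚ)^m *
      ((j.factorial : ℚ) / (a:ℚ)^j * (((a-1).choose (a-j)) : ℚ))
    = if j = m then (m.factorial : ℚ) else 0 := by
  by_cases hjm' : j = m
  · subst hjm'
    rw [if_pos rfl, Finset.Icc_self, Finset.sum_singleton]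
    have hm0 : (j:ℚ) ≠ 0 := Nat.cast_ne_zero.mpr (by omega)
    simp [Nat.sub_self]
    field_simp
  · have hjm2 : j < m := lt_of_le_of_ne hjm hjm'
    rw [if_neg hjm']
    set p : Polynomial ℚ := C (j:ℚ) * (X^(m-j) * (descPochhammer ℚ (j-1)).comp (X - C 1)) with hpdef
    have h1 : ((descPochhammer ℚ (j-1)).comp (X - C 1)).natDegree = j-1 := by
      rw [natDegree_comp, descPochhammer_natDegree, natDegree_X_sub_C, mul_one]
    have hdeg : p.natDegree < m := by
      have ha := natDegree_mul_le (p := C (j:ℚ))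
        (q := X^(m-j) * (descPochhammer ℚ (j-1)).comp (X - C 1))
      have hb := natDegree_mul_le (p := (X:Polynomial ℚ)^(m-j))
        (q := (descPochhammer ℚ (j-1)).comp (X - C 1))
      simp only [natDegree_C, natDegree_X_pow, h1] at ha hb
      rw [hpdef]
      omega
    have heval : ∀ a : ℕ, 1 ≤ a →
        p.eval (a:ℚ) = (j:ℚ) * (a:ℚ)^(m-j) * (((a-1).descFactorial (j-1) : ℕ) : ℚ) := by
      intro a ha
      have hcast : ((a:ℚ) - 1) = ((a-1 : ℕ) : ℚ) := by push_cast [ha]; ring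
      simp [hpdef, eval_comp, hcast, descPochhammer_eval_eq_descFactorial, mul_assoc]
    have hterm : ∀ a ∈ Finset.Icc j m,
        (-1:ℚ)^(m-a) * (m.choose a : ℚ) * (a:ℚ)^m *
          ((j.factorial : ℚ)/(a:ℚ)^j * (((a-1).choose (a-j)) : ℚ))
        = (-1:ℚ)^(m-a) * (m.choose a : ℚ) * p.eval (a:ℚ) := by
      intro a ha
      rw [Finset.mem_Icc] at ha
      have ha1 : 1 ≤ a := le_trans hj1 ha.1
      rw [heval a ha1]
      have hch : (a-1).choose (a-j) = (a-1).choose (j-1) := by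
        have h2 : j - 1 ≤ a - 1 := by omega
        have := Nat.choose_symm h2 (n := a-1)
        rw [show (a-1) - (j-1) = a - j by omega] at this
        exact this
      have hdf : (a-1).descFactorial (j-1) = (j-1).factorial * (a-1).choose (j-1) :=
        Nat.descFactorial_eq_factorial_mul_choose _ _
      have hfac : j * (j-1).factorial = j.factorial := Nat.mul_factorial_pred (by omega)
      have hpow : (a:ℚ)^m = (a:ℚ)^(m-j) * (a:ℚ)^j := by
        rw [← pow_add]; congr 1; omega
      have ha0 : (a:ℚ) ≠ 0 := Nat.cast_ne_zero.mpr (by omega)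
      rw [hch, hdf, hpow]
      push_cast [← hfac]
      field_simp
    rw [Finset.sum_congr rfl hterm]
    have hsub : Finset.Icc j m ⊆ Finset.range (m+1) := by
      intro x hx; rw [Finset.mem_Icc] at hx; rw [Finset.mem_range]; omega
    rw [Finset.sum_subset hsub]
    · exact alt_sum_poly m p hdeg
    · intro a ha hna
      rw [Finset.mem_range] at ha
      rw [Finset.mem_Icc] at hna
      have haj : a < j := by omega
      rcases Nat.eq_zero_or_pos a with rfl | ha1
      · have : p.eval 0 = 0 := by
          simp [hpdef, zero_pow (show m - j ≠ 0 by omega)]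
        simp [this]
      · have : p.eval (a:ℚ) = 0 := by
          rw [heval a ha1]
          rw [Nat.descFactorial_eq_zero_iff_lt.mpr (by omega)]
          simp
        simp [this]

/-- The inversion step solving the localization recursion for the series `A_a(u)`:
if `c_k = Σ_{j=1}^k (j!/k^j)·C(k−1,k−j)·b_j`, then
`Σ_{a=1}^m (−1)^{m−a}·C(m,a)·a^m·c_a = m!·b_m`. -/
theorem triangular_inversion {A : Type*} [CommRing A] [Algebra ℚ A] (b c : ℕ → A)
    (hc : ∀ k : ℕ, 1 ≤ k → c k = ∑ j ∈ Finset.Icc 1 k,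
      (((Nat.factorial j : ℚ) / (k : ℚ) ^ j) * ((k - 1).choose (k - j) : ℚ)) • b j) :
    ∀ m : ℕ, 1 ≤ m →
      ∑ a ∈ Finset.Icc 1 m, ((-1 : ℚ) ^ (m - a) * (m.choose a : ℚ) * (a : ℚ) ^ m) • c a
        = (Nat.factorial m : ℚ) • b m := by
  intro m hm
  have hrw : ∀ a ∈ Finset.Icc 1 m,
      ((-1 : ℚ) ^ (m - a) * (m.choose a : ℚ) * (a : ℚ) ^ m) • c a
      = ∑ j ∈ Finset.Icc 1 a,
          ((-1:ℚ)^(m-a) * (m.choose a : ℚ) * (a:ℚ)^m *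
            ((j.factorial : ℚ) / (a:ℚ)^j * (((a-1).choose (a-j)) : ℚ))) • b j := by
    intro a ha
    rw [Finset.mem_Icc] at ha
    rw [hc a ha.1, Finset.smul_sum]
    exact Finset.sum_congr rfl fun j _ => by rw [smul_smul]
  rw [Finset.sum_congr rfl hrw]
  rw [Finset.sum_comm' (t' := Finset.Icc 1 m) (s' := fun j => Finset.Icc j m)
    (fun a j => by simp only [Finset.mem_Icc]; omega)]
  have : ∀ j ∈ Finset.Icc 1 m,
      ∑ a ∈ Finset.Icc j m,
        ((-1:ℚ)^(m-a) * (m.choose a : ℚ) * (a:ℚ)^m *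
          ((j.factorial : ℚ) / (a:ℚ)^j * (((a-1).choose (a-j)) : ℚ))) • b j
      = (if j = m then (m.factorial : ℚ) else 0) • b j := by
    intro j hj
    rw [Finset.mem_Icc] at hj
    rw [← Finset.sum_smul, key_sum m j hj.1 hj.2]
  rw [Finset.sum_congr rfl this]
  rw [Finset.sum_eq_single_of_mem m (Finset.mem_Icc.mpr ⟨hm, le_refl m⟩)]
  · rw [if_pos rfl]
  · intro j _ hjm
    rw [if_neg hjm, zero_smul]
end

section
/- For all integers j, m with 1 ≤ j ≤ m, the sum Σ_{a=j}^{m} (−1)^{m−a}·C(m,a)·C(a−1, a−j)·a^{m−j} equals 1 if j = m and equals 0 if j < m. -/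
open Finset fwdDiff

/-- The span of binomial coefficient functions `x ↦ C(x,i)` for `i ≤ d`. -/
private def chooseSpan (d : ℕ) : Submodule ℤ (ℕ → ℤ) :=
  Submodule.span ℤ {f | ∃ i ≤ d, f = fun x : ℕ => (x.choose i : ℤ)}

private lemma choose_mem_chooseSpan {i d : ℕ} (h : i ≤ d) :
    (fun x : ℕ => (x.choose i : ℤ)) ∈ chooseSpan d :=
  Submodule.subset_span ⟨i, h, rfl⟩

private lemma chooseSpan_mono {d d' : ℕ} (h : d ≤ d') : chooseSpan d ≤ chooseSpan d' :=
  Submodule.span_mono fun f ⟨i, hi, hf⟩ => ⟨i, hi.trans h, hf⟩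

/-- `x * C(x,i) = (i+1)*C(x,i+1) + i*C(x,i)` as integers. -/
private lemma mul_choose_eq (x i : ℕ) :
    (x : ℤ) * (x.choose i : ℤ)
      = (i + 1 : ℤ) * (x.choose (i + 1) : ℤ) + (i : ℤ) * (x.choose i : ℤ) := by
  rcases le_or_gt i x with h | h
  · have h1 : x.choose (i + 1) * (i + 1) = x.choose i * (x - i) := Nat.choose_succ_right_eq x i
    have h2 : ((x - i : ℕ) : ℤ) = (x : ℤ) - i := by
      simpa using Int.ofNat_sub h
    have := congrArg (fun n : ℕ => (n : ℤ)) h1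
    push_cast at this
    rw [h2] at this
    linarith
  · rw [Nat.choose_eq_zero_of_lt h, Nat.choose_eq_zero_of_lt (Nat.lt_succ_of_lt h)]
    simp

private lemma mul_mem_chooseSpan {f : ℕ → ℤ} {d : ℕ} (hf : f ∈ chooseSpan d) :
    (fun x : ℕ => (x : ℤ) * f x) ∈ chooseSpan (d + 1) := by
  induction hf using Submodule.span_induction with
  | mem g hg =>
    obtain ⟨i, hi, rfl⟩ := hg
    have : (fun x : ℕ => (x : ℤ) * (x.choose i : ℤ))
        = (i + 1 : ℤ) • (fun x : ℕ => (x.choose (i + 1) : ℤ))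
          + (i : ℤ) • (fun x : ℕ => (x.choose i : ℤ)) := by
      funext x; simpa using mul_choose_eq x i
    rw [this]
    exact Submodule.add_mem _
      (Submodule.smul_mem _ _ (choose_mem_chooseSpan (by omega)))
      (Submodule.smul_mem _ _ (choose_mem_chooseSpan (by omega)))
  | zero =>
    have : (fun x : ℕ => (x : ℤ) * (0 : ℕ → ℤ) x) = 0 := by funext x; simp
    rw [this]; exact Submodule.zero_mem _
  | add g h _ _ hg hh =>
    have : (fun x : ℕ => (x : ℤ) * (g + h) x)
        = (fun x : ℕ => (x : ℤ) * g x) + fun x : ℕ => (x : ℤ) * h x := by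
      funext x; simp [mul_add]
    rw [this]; exact Submodule.add_mem _ hg hh
  | smul c g _ hg =>
    have : (fun x : ℕ => (x : ℤ) * (c • g) x) = c • fun x : ℕ => (x : ℤ) * g x := by
      funext x; simp [smul_eq_mul]; ring
    rw [this]; exact Submodule.smul_mem _ _ hg

private lemma fwdDiff_zero_of_mem {f : ℕ → ℤ} {d m : ℕ} (hf : f ∈ chooseSpan d) (hdm : d < m) :
    (fwdDiff (1 : ℕ))^[m] f 0 = 0 := by
  induction hf using Submodule.span_induction with
  | mem g hg =>
    obtain ⟨i, hi, rfl⟩ := hg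
    rw [fwdDiff_iter_choose_zero]
    simp [Nat.ne_of_gt (lt_of_le_of_lt hi hdm)]
  | zero =>
    rw [show (0 : ℕ → ℤ) = (0 : ℤ) • (0 : ℕ → ℤ) by simp, fwdDiff_iter_const_smul]
    simp
  | add g h _ _ hg hh => rw [fwdDiff_iter_add, Pi.add_apply, hg, hh, add_zero]
  | smul c g _ hg => rw [fwdDiff_iter_const_smul, Pi.smul_apply, hg, smul_zero]

private lemma key_mem {j k : ℕ} (hj : 1 ≤ j) :
    (fun x : ℕ => ((x - 1).choose (j - 1) : ℤ) * (x : ℤ) ^ (k + 1)) ∈ chooseSpan (j + k) := by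
  induction k with
  | zero =>
    have heq : (fun x : ℕ => ((x - 1).choose (j - 1) : ℤ) * (x : ℤ) ^ (0 + 1))
        = (j : ℤ) • fun x : ℕ => (x.choose j : ℤ) := by
      funext x
      simp only [pow_one, Pi.smul_apply, smul_eq_mul]
      cases x with
      | zero => simp [Nat.choose_eq_zero_of_lt hj]
      | succ n =>
        have h1 : (n + 1) * n.choose (j - 1) = (n + 1).choose j * j := by
          have := Nat.add_one_mul_choose_eq n (j - 1)
          rwa [Nat.sub_add_cancel hj] at this
        have h2 : ((n : ℤ) + 1) * (n.choose (j - 1) : ℤ) = ((n + 1).choose j : ℤ) * (j : ℤ) := by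
          exact_mod_cast congrArg (fun t : ℕ => (t : ℤ)) h1
        simp only [Nat.succ_sub_one]
        push_cast
        linarith
    rw [show j + 0 = j from rfl, heq]
    exact Submodule.smul_mem _ _ (choose_mem_chooseSpan le_rfl)
  | succ k ih =>
    have heq : (fun x : ℕ => ((x - 1).choose (j - 1) : ℤ) * (x : ℤ) ^ (k + 1 + 1))
        = fun x : ℕ => (x : ℤ) * (((x - 1).choose (j - 1) : ℤ) * (x : ℤ) ^ (k + 1)) := by
      funext x; ring
    rw [heq, show j + (k + 1) = (j + k) + 1 by omega]
    exact mul_mem_chooseSpan ih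

/-- The binomial orthogonality relation
`Σ_{a=j}^m (−1)^{m−a}·C(m,a)·C(a−1,a−j)·a^{m−j} = δ_{jm}` for `1 ≤ j ≤ m`. -/
theorem binomial_orthogonality (j m : ℕ) (hj : 1 ≤ j) (hjm : j ≤ m) :
    ∑ a ∈ Finset.Icc j m,
        (-1 : ℤ) ^ (m - a) * (m.choose a : ℤ) * ((a - 1).choose (a - j) : ℤ) * (a : ℤ) ^ (m - j)
      = if j = m then 1 else 0 := by
  rcases eq_or_lt_of_le hjm with rfl | hlt
  · rw [if_pos rfl, Finset.Icc_self, Finset.sum_singleton]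
    simp
  · rw [if_neg (Nat.ne_of_lt hlt)]
    set f : ℕ → ℤ := fun x => ((x - 1).choose (j - 1) : ℤ) * (x : ℤ) ^ (m - j) with hf
    have hstep : ∑ a ∈ Finset.Icc j m,
        (-1 : ℤ) ^ (m - a) * (m.choose a : ℤ) * ((a - 1).choose (a - j) : ℤ) * (a : ℤ) ^ (m - j)
        = ∑ a ∈ Finset.range (m + 1), ((-1 : ℤ) ^ (m - a) * (m.choose a : ℤ)) * f a := by
      have h1 : ∑ a ∈ Finset.Icc j m,
          (-1 : ℤ) ^ (m - a) * (m.choose a : ℤ) * ((a - 1).choose (a - j) : ℤ) * (a : ℤ) ^ (m - j)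
          = ∑ a ∈ Finset.Icc j m, ((-1 : ℤ) ^ (m - a) * (m.choose a : ℤ)) * f a := by
        apply Finset.sum_congr rfl
        intro a ha
        have haj : j ≤ a := (Finset.mem_Icc.mp ha).1
        have h2 : (a - 1).choose (a - j) = (a - 1).choose (j - 1) := by
          rw [show a - j = (a - 1) - (j - 1) by omega]
          exact Nat.choose_symm (by omega)
        rw [hf, h2]; ring
      rw [h1]
      apply Finset.sum_subset
      · intro a ha
        exact Finset.mem_range.mpr (by have := (Finset.mem_Icc.mp ha).2; omega)
      · intro a ha hna
        have haj : a < j := by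
          have ham := Finset.mem_range.mp ha
          by_contra h
          exact hna (Finset.mem_Icc.mpr ⟨by omega, by omega⟩)
        rcases Nat.eq_zero_or_pos a with rfl | hpos
        · have hne : (m - j) ≠ 0 := by omega
          rw [hf]; simp [zero_pow hne]
        · have h0 : (a - 1).choose (j - 1) = 0 := Nat.choose_eq_zero_of_lt (by omega)
          rw [hf]; simp [h0]
    rw [hstep]
    have hshift := fwdDiff_iter_eq_sum_shift (1 : ℕ) f m 0
    have hsum : ∑ a ∈ Finset.range (m + 1), ((-1 : ℤ) ^ (m - a) * (m.choose a : ℤ)) * f a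
        = (fwdDiff (1 : ℕ))^[m] f 0 := by
      rw [hshift]
      apply Finset.sum_congr rfl
      intro k _
      simp [smul_eq_mul]
    rw [hsum]
    have hmem : f ∈ chooseSpan (m - 1) := by
      have := key_mem (k := m - j - 1) hj
      rw [show j + (m - j - 1) = m - 1 by omega] at this
      rw [show m - j - 1 + 1 = m - j by omega] at this
      exact this
    exact fwdDiff_zero_of_mem hmem (by omega)
end

section
/- Let u be a real number with 0 < u < 2π and set S(u) = sin(u/2)/(u/2) (which is nonzero). Let z be a complex number which is not equal to 0, −1, −2, − 3, …, and define G(w,z) = Σ_{m≥1} w^m/(z(z+1)⋯(z+m)) for complex w; this series converges absolutely. Then Σ_{m≥1} m·z^{m−1}·S(mu) / ( S(u)^m · (z+1)(z+2)⋯(z+m) ) = (1/(iu)) · [ G( izu/(1−e^{−iu}), z ) − G( −izu/(1−e^{iu}), z ) ], where i is the imaginary unit, the left-hand series converges absolutely, and S(mu) = sin(mu/2)/(mu/2). -/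
open Complex

/-- The hypergeometric-type series `G(w,z) = Σ_{m≥1} w^m / (z(z+1)⋯(z+m))`. -/
noncomputable def Gser (z w : ℂ) : ℂ :=
  ∑' m : ℕ, w ^ (m + 1) / ∏ k ∈ Finset.range (m + 2), (z + (k : ℂ))

lemma sumG (z : ℂ) (hz : ∀ k : ℕ, z ≠ -(k : ℂ)) (w : ℂ) :
    Summable fun m : ℕ => ‖w ^ (m + 1) / ∏ k ∈ Finset.range (m + 2), (z + (k : ℂ))‖ := by
  have hzk : ∀ k : ℕ, z + (k : ℂ) ≠ 0 := by
    intro k h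
    exact hz k (eq_neg_of_add_eq_zero_left h)
  have hQ : ∀ n : ℕ, (∏ k ∈ Finset.range n, (z + (k : ℂ))) ≠ 0 := fun n =>
    Finset.prod_ne_zero_iff.mpr fun k _ => hzk k
  rw [summable_norm_iff]
  apply summable_of_ratio_norm_eventually_le (r := 1/2) (by norm_num)
  filter_upwards [Filter.eventually_ge_atTop ⌈‖z‖ + 2 * ‖w‖⌉₊] with n hn
  have hn' : (⌈‖z‖ + 2 * ‖w‖⌉₊ : ℝ) ≤ n := Nat.cast_le.mpr hn
  have hle : ‖z‖ + 2 * ‖w‖ ≤ n := le_trans (Nat.le_ceil _) hn'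
  have hc : 2 * ‖w‖ + 2 ≤ ‖z + ((n + 2 : ℕ) : ℂ)‖ := by
    have h1 : ‖((n + 2 : ℕ) : ℂ)‖ = (n : ℝ) + 2 := by
      rw [Complex.norm_natCast]; push_cast; ring
    have h2 : ‖((n + 2 : ℕ) : ℂ)‖ ≤ ‖z + ((n + 2 : ℕ) : ℂ)‖ + ‖z‖ := by
      calc ‖((n + 2 : ℕ) : ℂ)‖ = ‖(z + ((n + 2 : ℕ) : ℂ)) - z‖ := by ring_nf
        _ ≤ ‖z + ((n + 2 : ℕ) : ℂ)‖ + ‖z‖ := norm_sub_le _ _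
    linarith
  have hsplit : (∏ k ∈ Finset.range (n + 1 + 2), (z + (k : ℂ)))
      = (∏ k ∈ Finset.range (n + 2), (z + (k : ℂ))) * (z + ((n + 2 : ℕ) : ℂ)) := by
    rw [show n + 1 + 2 = (n + 2) + 1 from rfl, Finset.prod_range_succ]
  rw [hsplit, norm_div, norm_div, norm_mul, norm_pow, norm_pow]
  have hQn : 0 < ‖∏ k ∈ Finset.range (n + 2), (z + (k : ℂ))‖ := norm_pos_iff.mpr (hQ _)
  have hcpos : (0:ℝ) < 2 * ‖w‖ + 2 := by positivity
  have hcpos' : (0:ℝ) < ‖z + ((n + 2 : ℕ) : ℂ)‖ := lt_of_lt_of_le hcpos hc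
  rw [pow_succ]
  have key : ‖w‖ / ‖z + ((n + 2 : ℕ) : ℂ)‖ ≤ 1 / 2 := by
    rw [div_le_div_iff₀ hcpos' (by norm_num)]
    linarith
  calc ‖w‖ ^ (n + 1) * ‖w‖ /
        (‖∏ k ∈ Finset.range (n + 2), (z + (k : ℂ))‖ * ‖z + ((n + 2 : ℕ) : ℂ)‖)
      = (‖w‖ / ‖z + ((n + 2 : ℕ) : ℂ)‖) *
        (‖w‖ ^ (n + 1) / ‖∏ k ∈ Finset.range (n + 2), (z + (k : ℂ))‖) := by
        field_simp
    _ ≤ (1/2) * (‖w‖ ^ (n + 1) / ‖∏ k ∈ Finset.range (n + 2), (z + (k : ℂ))‖) := by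
        apply mul_le_mul_of_nonneg_right key (by positivity)

lemma denom1 (u : ℝ) :
    1 - Complex.exp (-(Complex.I) * (u : ℂ))
      = Complex.exp (-(Complex.I * ((u:ℂ)/2))) * (2 * Complex.I * Complex.sin ((u:ℂ)/2)) := by
  have h2s := Complex.two_sin ((u:ℂ)/2)
  have hEF : Complex.exp (Complex.I * ((u:ℂ)/2)) * Complex.exp (-(Complex.I * ((u:ℂ)/2))) = 1 := by
    rw [← Complex.exp_add]; ring_nf; exact Complex.exp_zero
  have hFF : Complex.exp (-(Complex.I) * (u:ℂ))
      = Complex.exp (-(Complex.I * ((u:ℂ)/2))) * Complex.exp (-(Complex.I * ((u:ℂ)/2))) := by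
    rw [← Complex.exp_add]; ring_nf
  rw [hFF]
  have harg1 : Complex.exp (-((u:ℂ)/2) * Complex.I) = Complex.exp (-(Complex.I * ((u:ℂ)/2))) := by
    ring_nf
  have harg2 : Complex.exp (((u:ℂ)/2) * Complex.I) = Complex.exp (Complex.I * ((u:ℂ)/2)) := by
    ring_nf
  rw [harg1, harg2] at h2s
  linear_combination (-(Complex.exp (-(Complex.I * ((u:ℂ)/2))) * Complex.I)) * h2s +
    (Complex.exp (Complex.I * ((u:ℂ)/2)) * Complex.exp (-(Complex.I * ((u:ℂ)/2)))
      - Complex.exp (-(Complex.I * ((u:ℂ)/2))) * Complex.exp (-(Complex.I * ((u:ℂ)/2)))) * Complex.I_sq - hEF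

lemma denom2 (u : ℝ) :
    1 - Complex.exp (Complex.I * (u : ℂ))
      = Complex.exp (Complex.I * ((u:ℂ)/2)) * (-(2 * Complex.I * Complex.sin ((u:ℂ)/2))) := by
  have h2s := Complex.two_sin ((u:ℂ)/2)
  have hEF : Complex.exp (Complex.I * ((u:ℂ)/2)) * Complex.exp (-(Complex.I * ((u:ℂ)/2))) = 1 := by
    rw [← Complex.exp_add]; ring_nf; exact Complex.exp_zero
  have hEE : Complex.exp (Complex.I * (u:ℂ))
      = Complex.exp (Complex.I * ((u:ℂ)/2)) * Complex.exp (Complex.I * ((u:ℂ)/2)) := by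
    rw [← Complex.exp_add]; ring_nf
  rw [hEE]
  have harg1 : Complex.exp (-((u:ℂ)/2) * Complex.I) = Complex.exp (-(Complex.I * ((u:ℂ)/2))) := by
    ring_nf
  have harg2 : Complex.exp (((u:ℂ)/2) * Complex.I) = Complex.exp (Complex.I * ((u:ℂ)/2)) := by
    ring_nf
  rw [harg1, harg2] at h2s
  linear_combination (Complex.exp (Complex.I * ((u:ℂ)/2)) * Complex.I) * h2s +
    (Complex.exp (Complex.I * ((u:ℂ)/2)) * Complex.exp (-(Complex.I * ((u:ℂ)/2)))
      - Complex.exp (Complex.I * ((u:ℂ)/2)) * Complex.exp (Complex.I * ((u:ℂ)/2))) * Complex.I_sq - hEF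

lemma alg (m : ℕ) (ν z uc s P σ : ℂ) (hν : ν ≠ 0) (hz : z ≠ 0) (hu : uc ≠ 0)
    (hs : s ≠ 0) (hP : P ≠ 0) :
    ν * z ^ m * (σ / (ν * uc / 2)) / ((s / (uc / 2)) ^ (m + 1) * P)
      = 1 / (Complex.I * uc) * ((z * uc / (2 * s)) ^ (m + 1) * (2 * Complex.I * σ) / (z * P)) := by
  have hI := Complex.I_ne_zero
  field_simp
  ring_nf
  simp only [inv_inv, one_div]
  ring

/-- For `0 < u < 2π` and `z` not a nonpositive integer,
`Σ_{m≥1} m z^{m−1} S(mu)/(S(u)^m (z+1)⋯(z+m))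
  = (1/(iu))·[G(izu/(1−e^{−iu}),z) − G(−izu/(1−e^{iu}),z)]`,
with all series involved converging absolutely, where `S(v) = sin(v/2)/(v/2)`. -/
theorem hodge_series_analytic (u : ℝ) (hu : 0 < u) (hu' : u < 2 * Real.pi)
    (z : ℂ) (hz : ∀ k : ℕ, z ≠ -(k : ℂ)) :
    (∀ w : ℂ, Summable fun m : ℕ =>
      ‖w ^ (m + 1) / ∏ k ∈ Finset.range (m + 2), (z + (k : ℂ))‖) ∧
    Summable (fun m : ℕ =>
      ‖((m + 1 : ℕ) : ℂ) * z ^ m *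
          ((Real.sin (((m + 1 : ℕ) : ℝ) * u / 2) / (((m + 1 : ℕ) : ℝ) * u / 2) : ℝ) : ℂ) /
        (((Real.sin (u / 2) / (u / 2) : ℝ) : ℂ) ^ (m + 1) *
          ∏ k ∈ Finset.Icc 1 (m + 1), (z + (k : ℂ)))‖) ∧
    (∑' m : ℕ,
        ((m + 1 : ℕ) : ℂ) * z ^ m *
            ((Real.sin (((m + 1 : ℕ) : ℝ) * u / 2) / (((m + 1 : ℕ) : ℝ) * u / 2) : ℝ) : ℂ) /
          (((Real.sin (u / 2) / (u / 2) : ℝ) : ℂ) ^ (m + 1) *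
            ∏ k ∈ Finset.Icc 1 (m + 1), (z + (k : ℂ)))
      = 1 / (Complex.I * (u : ℂ)) *
          (Gser z (Complex.I * z * (u : ℂ) / (1 - Complex.exp (-(Complex.I) * (u : ℂ))))
            - Gser z (-(Complex.I) * z * (u : ℂ) / (1 - Complex.exp (Complex.I * (u : ℂ)))))) := by
  have hzk : ∀ k : ℕ, z + (k : ℂ) ≠ 0 := by
    intro k h
    exact hz k (eq_neg_of_add_eq_zero_left h)
  have hz0 : z ≠ 0 := by
    have := hzk 0; simpa using this
  have huC : (u : ℂ) ≠ 0 := by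
    exact_mod_cast Complex.ofReal_ne_zero.mpr (ne_of_gt hu)
  have hsR : Real.sin (u / 2) ≠ 0 := by
    have : 0 < Real.sin (u / 2) :=
      Real.sin_pos_of_pos_of_lt_pi (by linarith) (by linarith [Real.pi_pos])
    exact ne_of_gt this
  have hs : Complex.sin ((u : ℂ) / 2) ≠ 0 := by
    have : ((Real.sin (u / 2) : ℝ) : ℂ) = Complex.sin ((u : ℂ) / 2) := by
      rw [Complex.ofReal_sin]; norm_num
    rw [← this]
    exact_mod_cast Complex.ofReal_ne_zero.mpr hsR
  set E := Complex.exp (Complex.I * ((u:ℂ)/2)) with hE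
  set F := Complex.exp (-(Complex.I * ((u:ℂ)/2))) with hF
  set s := Complex.sin ((u:ℂ)/2) with hsdef
  set wA := Complex.I * z * (u : ℂ) / (1 - Complex.exp (-(Complex.I) * (u : ℂ))) with hwA
  set wB := -(Complex.I) * z * (u : ℂ) / (1 - Complex.exp (Complex.I * (u : ℂ))) with hwB
  have hEne : E ≠ 0 := Complex.exp_ne_zero _
  have hFne : F ≠ 0 := Complex.exp_ne_zero _
  have hEF : E * F = 1 := by
    rw [hE, hF, ← Complex.exp_add]; ring_nf; exact Complex.exp_zero
  have hA : wA = z * (u:ℂ) * E / (2 * s) := by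
    rw [hwA, denom1 u, ← hF, ← hsdef]
    field_simp
    linear_combination (-1 : ℂ) * hEF
  have hB : wB = z * (u:ℂ) * F / (2 * s) := by
    rw [hwB, denom2 u, ← hE, ← hsdef]
    field_simp
    linear_combination (-1 : ℂ) * hEF
  -- key power identity
  have key : ∀ m : ℕ, wA ^ (m+1) - wB ^ (m+1)
      = (z * (u:ℂ) / (2 * s)) ^ (m+1) *
        (2 * Complex.I * Complex.sin (((m+1 : ℕ) : ℂ) * (u:ℂ) / 2)) := by
    intro m
    have hApow : wA ^ (m+1) = (z * (u:ℂ) / (2 * s)) ^ (m+1) * E ^ (m+1) := by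
      rw [hA, show z * (u:ℂ) * E / (2 * s) = (z * (u:ℂ) / (2 * s)) * E by ring, mul_pow]
    have hBpow : wB ^ (m+1) = (z * (u:ℂ) / (2 * s)) ^ (m+1) * F ^ (m+1) := by
      rw [hB, show z * (u:ℂ) * F / (2 * s) = (z * (u:ℂ) / (2 * s)) * F by ring, mul_pow]
    have hEpow : E ^ (m+1) = Complex.exp ((((m+1:ℕ):ℂ) * (u:ℂ) / 2) * Complex.I) := by
      rw [hE, ← Complex.exp_nat_mul]
      congr 1; push_cast; ring
    have hFpow : F ^ (m+1) = Complex.exp (-(((m+1:ℕ):ℂ) * (u:ℂ) / 2) * Complex.I) := by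
      rw [hF, ← Complex.exp_nat_mul]
      congr 1; push_cast; ring
    have h2s := Complex.two_sin ((((m+1:ℕ):ℂ) * (u:ℂ) / 2))
    rw [hApow, hBpow, hEpow, hFpow]
    linear_combination (-((z * (u:ℂ) / (2 * s)) ^ (m+1) * Complex.I)) * h2s +
      ((z * (u:ℂ) / (2 * s)) ^ (m+1) *
        (Complex.exp (-(((m+1:ℕ):ℂ) * (u:ℂ) / 2) * Complex.I)
          - Complex.exp ((((m+1:ℕ):ℂ) * (u:ℂ) / 2) * Complex.I))) * Complex.I_sq
      + (z*z^m*(u:ℂ)*(u:ℂ)^m*s⁻¹*s⁻¹^m*((1:ℂ)/2)^m *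
          (Complex.exp ((((m+1:ℕ):ℂ)*(u:ℂ)/2)*Complex.I)
            - Complex.exp (-(((m+1:ℕ):ℂ)*(u:ℂ)/2)*Complex.I))) * Complex.I_sq
  -- product split
  have hPne : ∀ m : ℕ, (∏ k ∈ Finset.Icc 1 (m+1), (z + (k : ℂ))) ≠ 0 := fun m =>
    Finset.prod_ne_zero_iff.mpr fun k _ => hzk k
  have hQsplit : ∀ m : ℕ, (∏ k ∈ Finset.range (m + 2), (z + (k : ℂ)))
      = z * ∏ k ∈ Finset.Icc 1 (m+1), (z + (k : ℂ)) := by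
    intro m
    rw [Finset.prod_range_succ', ← Finset.Ico_add_one_right_eq_Icc, Finset.prod_Ico_eq_prod_range,
      show (m + 1 + 1) - 1 = m + 1 from rfl]
    have h : (∏ i ∈ Finset.range (m+1), (z + ((i+1:ℕ):ℂ)))
        = ∏ i ∈ Finset.range (m+1), (z + ((1+i:ℕ):ℂ)) :=
      Finset.prod_congr rfl (fun i _ => by rw [Nat.add_comm])
    rw [h, Nat.cast_zero, add_zero, mul_comm]
  -- termwise equality
  have termEq : ∀ m : ℕ,
      ((m + 1 : ℕ) : ℂ) * z ^ m *
          ((Real.sin (((m + 1 : ℕ) : ℝ) * u / 2) / (((m + 1 : ℕ) : ℝ) * u / 2) : ℝ) : ℂ) /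
        (((Real.sin (u / 2) / (u / 2) : ℝ) : ℂ) ^ (m + 1) *
          ∏ k ∈ Finset.Icc 1 (m + 1), (z + (k : ℂ)))
      = 1 / (Complex.I * (u : ℂ)) *
          (wA ^ (m+1) / ∏ k ∈ Finset.range (m + 2), (z + (k : ℂ))
            - wB ^ (m+1) / ∏ k ∈ Finset.range (m + 2), (z + (k : ℂ))) := by
    intro m
    rw [div_sub_div_same, key m, hQsplit m]
    have hcast1 : ((Real.sin (((m + 1 : ℕ) : ℝ) * u / 2) / (((m + 1 : ℕ) : ℝ) * u / 2) : ℝ) : ℂ)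
        = Complex.sin (((m+1 : ℕ) : ℂ) * (u:ℂ) / 2) / (((m+1:ℕ):ℂ) * (u:ℂ) / 2) := by
      push_cast [← Complex.ofReal_sin]
      norm_num
    have hcast2 : ((Real.sin (u / 2) / (u / 2) : ℝ) : ℂ) = s / ((u:ℂ) / 2) := by
      rw [hsdef]
      push_cast [← Complex.ofReal_sin]
      norm_num
    rw [hcast1, hcast2]
    exact alg m ((m+1:ℕ):ℂ) z (u:ℂ) s _ _ (Nat.cast_ne_zero.mpr (Nat.succ_ne_zero m))
      hz0 huC hs (hPne m)
  refine ⟨sumG z hz, ?_, ?_⟩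
  · have h1 : Summable (fun m : ℕ =>
        wA ^ (m+1) / ∏ k ∈ Finset.range (m + 2), (z + (k : ℂ))) :=
      summable_norm_iff.mp (sumG z hz wA)
    have h2 : Summable (fun m : ℕ =>
        wB ^ (m+1) / ∏ k ∈ Finset.range (m + 2), (z + (k : ℂ))) :=
      summable_norm_iff.mp (sumG z hz wB)
    have h3 := ((h1.sub h2).mul_left (1 / (Complex.I * (u : ℂ))))
    have h4 : Summable (fun m : ℕ => ‖1 / (Complex.I * (u : ℂ)) *
        (wA ^ (m+1) / ∏ k ∈ Finset.range (m + 2), (z + (k : ℂ))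
          - wB ^ (m+1) / ∏ k ∈ Finset.range (m + 2), (z + (k : ℂ)))‖) :=
      summable_norm_iff.mpr h3
    apply h4.congr
    intro m
    rw [termEq m]
  · have h1 : Summable (fun m : ℕ =>
        wA ^ (m+1) / ∏ k ∈ Finset.range (m + 2), (z + (k : ℂ))) :=
      summable_norm_iff.mp (sumG z hz wA)
    have h2 : Summable (fun m : ℕ =>
        wB ^ (m+1) / ∏ k ∈ Finset.range (m + 2), (z + (k : ℂ))) :=
      summable_norm_iff.mp (sumG z hz wB)
    calc (∑' m : ℕ,
        ((m + 1 : ℕ) : ℂ) * z ^ m *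
            ((Real.sin (((m + 1 : ℕ) : ℝ) * u / 2) / (((m + 1 : ℕ) : ℝ) * u / 2) : ℝ) : ℂ) /
          (((Real.sin (u / 2) / (u / 2) : ℝ) : ℂ) ^ (m + 1) *
            ∏ k ∈ Finset.Icc 1 (m + 1), (z + (k : ℂ))))
        = ∑' m : ℕ, 1 / (Complex.I * (u : ℂ)) *
            (wA ^ (m+1) / ∏ k ∈ Finset.range (m + 2), (z + (k : ℂ))
              - wB ^ (m+1) / ∏ k ∈ Finset.range (m + 2), (z + (k : ℂ))) :=
          tsum_congr termEq
      _ = 1 / (Complex.I * (u : ℂ)) *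
            ∑' m : ℕ, (wA ^ (m+1) / ∏ k ∈ Finset.range (m + 2), (z + (k : ℂ))
              - wB ^ (m+1) / ∏ k ∈ Finset.range (m + 2), (z + (k : ℂ))) := tsum_mul_left
      _ = 1 / (Complex.I * (u : ℂ)) * (Gser z wA - Gser z wB) := by
          rw [Summable.tsum_sub h1 h2]; rfl
end
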